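/- Let P = (γ,θ,ν) ∈ 𝒬_1, and suppose ℛ(P) is nonempty. Then ℛ(P) contains a vector x which satisfies: all components of x lie in (0, 1-γ); any two distinct components x_i ≠ x_j satisfy x_i + x_j ≥ 1-γ; and for all i ≠ j, either x_i = x_j or |x_i - x_j| > ν. (That is, the 'symmetrized, coagulated' normal form exists within ℛ(P).) -/

import Mathlib

/-- Membership in the fundamental region `ℛ(γ,θ,ν)`: all components in `(0, 1-γ)`,
components summing to `1`, and no proper subsum in `[θ, θ+ν]`. -/
def MemR (γ θ ν : ℝ) {n : ℕ} (y : Fin n → ℝ) : Prop :=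
  (∀ i, 0 < y i ∧ y i < 1 - γ) ∧ (∑ i, y i = 1) ∧
    ∀ A : Finset (Fin n), A.Nonempty → A ≠ Finset.univ →
      (∑ i ∈ A, y i) ∉ Set.Icc θ (θ + ν)

open Finset

lemma interval_avoid {θ ν C d T : ℝ} (hd : 0 ≤ d) (hdν : d ≤ ν) {r₁ r₂ : ℕ} (h12 : r₁ ≤ r₂)
    (h : ∀ r : ℕ, r₁ ≤ r → r ≤ r₂ → C - (r : ℝ) * d ∉ Set.Icc θ (θ + ν))
    (hT1 : C - (r₂ : ℝ) * d ≤ T) (hT2 : T ≤ C - (r₁ : ℝ) * d) :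
    T ∉ Set.Icc θ (θ + ν) := by
  have h1 := h r₁ le_rfl h12
  rw [Set.mem_Icc] at h1
  push_neg at h1
  by_cases hlow : C - (r₁ : ℝ) * d < θ
  · rw [Set.mem_Icc]; push_neg; intro hθT; linarith
  · push_neg at hlow
    have hhigh : θ + ν < C - (r₁ : ℝ) * d := h1 hlow
    have hall : ∀ r : ℕ, r₁ ≤ r → r ≤ r₂ → θ + ν < C - (r : ℝ) * d := by
      intro r hr1
      induction r, hr1 using Nat.le_induction with
      | base => intro _; exact hhigh
      | succ m hm ih =>
        intro hm2
        have ihv : θ + ν < C - (m : ℝ) * d := ih (by omega)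
        have hgt : θ < C - ((m + 1 : ℕ) : ℝ) * d := by push_cast; linarith
        have h2 := h (m+1) (by omega) hm2
        rw [Set.mem_Icc] at h2; push_neg at h2
        exact h2 (le_of_lt hgt)
    have := hall r₂ h12 le_rfl
    rw [Set.mem_Icc]; push_neg; intro hθT; linarith

lemma memR_perm {γ θ ν : ℝ} {n : ℕ} {y : Fin n → ℝ} (e : Equiv.Perm (Fin n))
    (h : MemR γ θ ν y) : MemR γ θ ν (y ∘ e) := by
  obtain ⟨h1, h2, h3⟩ := h
  refine ⟨fun i => h1 (e i), ?_, ?_⟩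
  · rw [← h2]; exact Equiv.sum_comp e y
  · intro A hA hAu
    have hsum : ∑ i ∈ A, (y ∘ e) i = ∑ j ∈ A.image e, y j := by
      rw [Finset.sum_image (fun x _ y _ hxy => e.injective hxy)]; rfl
    rw [hsum]
    apply h3 _ (hA.image e)
    intro hcon
    apply hAu
    apply Finset.eq_univ_of_card
    have hc := Finset.card_image_of_injective A e.injective
    rw [hcon, Finset.card_univ] at hc
    rw [← hc]

def mergeLast {n : ℕ} (w : Fin (n+2) → ℝ) : Fin (n+1) → ℝ :=
  fun k => if (k : ℕ) < n then w k.castSucc else w k.castSucc + w (Fin.last (n+1))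

lemma mergeLast_apply {n : ℕ} (w : Fin (n+2) → ℝ) (k : Fin (n+1)) :
    mergeLast w k = w k.castSucc + if k = Fin.last n then w (Fin.last (n+1)) else 0 := by
  unfold mergeLast
  have : (k : ℕ) < n ↔ ¬ (k = Fin.last n) := by
    rw [Fin.ext_iff, Fin.val_last]
    omega
  split
  · rw [if_neg (this.mp ‹_›)]; ring
  · have hk : k = Fin.last n := by
      by_contra hc
      exact ‹¬_› (this.mpr hc)
    rw [if_pos hk]

lemma mergeLast_sum {n : ℕ} (w : Fin (n+2) → ℝ) (A : Finset (Fin (n+1))) :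
    ∑ k ∈ A, mergeLast w k =
      ∑ j ∈ A.image Fin.castSucc, w j +
        (if Fin.last n ∈ A then w (Fin.last (n+1)) else 0) := by
  simp only [mergeLast_apply, Finset.sum_add_distrib]
  congr 1
  · rw [Finset.sum_image (fun x _ y _ hxy => Fin.castSucc_injective _ hxy)]
  · rw [Finset.sum_ite_eq' A (Fin.last n) (fun _ => w (Fin.last (n+1)))]

lemma castSucc_ne_last {n : ℕ} (k : Fin (n+1)) :
    (Fin.castSucc k : Fin (n+2)) ≠ Fin.last (n+1) := by
  intro hc
  have := congrArg Fin.val hc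
  rw [Fin.coe_castSucc, Fin.val_last] at this
  omega

lemma memR_mergeLast {γ θ ν : ℝ} {n : ℕ} {w : Fin (n+2) → ℝ} (h : MemR γ θ ν w)
    (hlt : w (Fin.castSucc (Fin.last n)) + w (Fin.last (n+1)) < 1 - γ) :
    MemR γ θ ν (mergeLast w) := by
  obtain ⟨h1, h2, h3⟩ := h
  have hlast_notmem : ∀ (A : Finset (Fin (n+1))),
      Fin.last (n+1) ∉ A.image Fin.castSucc := by
    intro A hc
    obtain ⟨k, _, hk⟩ := Finset.mem_image.mp hc
    exact castSucc_ne_last k hk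
  refine ⟨?_, ?_, ?_⟩
  · intro k
    rw [mergeLast_apply]
    split
    · subst ‹k = Fin.last n›
      exact ⟨add_pos (h1 _).1 (h1 _).1, hlt⟩
    · simpa using h1 k.castSucc
  · rw [mergeLast_sum, if_pos (mem_univ _),
      Finset.sum_image (fun x _ y _ hxy => Fin.castSucc_injective _ hxy)]
    rw [Fin.sum_univ_castSucc (f := w)] at h2
    exact h2
  · intro A hA hAu
    rw [mergeLast_sum]
    set B : Finset (Fin (n+2)) := A.image Fin.castSucc ∪
      (if Fin.last n ∈ A then {Fin.last (n+1)} else ∅) with hB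
    have hsum : ∑ j ∈ A.image Fin.castSucc, w j
        + (if Fin.last n ∈ A then w (Fin.last (n+1)) else 0) = ∑ j ∈ B, w j := by
      rw [hB]
      by_cases hmem : Fin.last n ∈ A
      · rw [if_pos hmem, if_pos hmem, Finset.sum_union (by
          rw [Finset.disjoint_singleton_right]; exact hlast_notmem A)]
        simp
      · rw [if_neg hmem, if_neg hmem]
        simp
    rw [hsum]
    apply h3
    · obtain ⟨x, hx⟩ := hA.image Fin.castSucc
      exact ⟨x, Finset.mem_union_left _ hx⟩
    · intro hBu
      have ⟨k, hk⟩ : ∃ k, k ∉ A := by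
        by_contra hcon
        push_neg at hcon
        exact hAu (Finset.eq_univ_iff_forall.mpr hcon)
      by_cases hkl : k = Fin.last n
      · have : Fin.last (n+1) ∉ B := by
          rw [hB, Finset.mem_union, if_neg (hkl ▸ hk)]
          simp only [Finset.notMem_empty, or_false]
          exact hlast_notmem A
        rw [hBu] at this
        exact this (mem_univ _)
      · have : Fin.castSucc k ∉ B := by
          rw [hB, Finset.mem_union]
          rintro (hc | hc)
          · obtain ⟨x, hx, hxe⟩ := Finset.mem_image.mp hc
            exact hk ((Fin.castSucc_injective _ hxe) ▸ hx)
          · split at hc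
            · exact castSucc_ne_last k (Finset.mem_singleton.mp hc)
            · exact absurd hc (Finset.notMem_empty _)
        rw [hBu] at this
        exact this (mem_univ _)

lemma phase1 (γ θ ν : ℝ) : ∀ n (y : Fin n → ℝ), MemR γ θ ν y →
    ∃ (m : ℕ) (x : Fin m → ℝ), MemR γ θ ν x ∧ ∀ i j, i ≠ j → 1 - γ ≤ x i + x j := by
  intro n
  induction n using Nat.strong_induction_on with
  | _ n ih =>
    intro y hy
    by_cases hgood : ∀ i j, i ≠ j → 1 - γ ≤ y i + y j
    · exact ⟨n, y, hy, hgood⟩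
    · push_neg at hgood
      obtain ⟨i, j, hij, hlt⟩ := hgood
      have h2n : 2 ≤ n := by
        by_contra hc
        push_neg at hc
        have : Subsingleton (Fin n) := by
          interval_cases n
          · exact ⟨fun a b => a.elim0⟩
          · exact ⟨fun a b => Subsingleton.elim a b⟩
        exact hij (Subsingleton.elim i j)
      obtain ⟨m, rfl⟩ : ∃ m, n = m + 2 := ⟨n - 2, by omega⟩
      set a : Fin (m+2) := Fin.last (m+1) with ha
      set b : Fin (m+2) := (Fin.last m).castSucc with hb
      have hba : b ≠ a := castSucc_ne_last (Fin.last m)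
      set s1 : Equiv.Perm (Fin (m+2)) := Equiv.swap a j with hs1
      have hs1i : s1 i ≠ a := by
        intro hc
        have : i = s1 a := by
          rw [← hc, Equiv.swap_apply_self]
        rw [hs1, Equiv.swap_apply_left] at this
        exact hij this
      set s2 : Equiv.Perm (Fin (m+2)) := Equiv.swap b (s1 i) with hs2
      set g : Equiv.Perm (Fin (m+2)) := s2.trans s1 with hg
      have hga : g a = j := by
        have h2a : s2 a = a := Equiv.swap_apply_of_ne_of_ne (Ne.symm hba) (Ne.symm hs1i)
        show s1 (s2 a) = j
        rw [h2a, hs1, Equiv.swap_apply_left]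
      have hgb : g b = i := by
        show s1 (s2 b) = i
        rw [hs2, Equiv.swap_apply_left, hs1, Equiv.swap_apply_self]
      have hw : MemR γ θ ν (y ∘ g) := memR_perm g hy
      have hmerge : MemR γ θ ν (mergeLast (y ∘ g)) := by
        apply memR_mergeLast hw
        show y (g b) + y (g a) < 1 - γ
        rw [hga, hgb]
        exact hlt
      exact ih (m+1) (by omega) _ hmerge

set_option maxHeartbeats 1000000 in
lemma average_step {γ θ ν : ℝ} {n : ℕ} {y : Fin n → ℝ} {a b μ : ℝ} {p q : ℕ}
    (hp : (univ.filter (fun k => y k = a)).card = p)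
    (hq : (univ.filter (fun k => y k = b)).card = q)
    (hp1 : 1 ≤ p) (hq1 : 1 ≤ q)
    (hμ : μ * ((p : ℝ) + q) = (p : ℝ) * a + (q : ℝ) * b)
    (hab : a < b) (hba : b - a ≤ ν) (hy : MemR γ θ ν y) :
    MemR γ θ ν (fun k => if y k = a ∨ y k = b then μ else y k) := by
  classical
  obtain ⟨h1, h2, h3⟩ := hy
  set z : Fin n → ℝ := fun k => if y k = a ∨ y k = b then μ else y k with hz
  have hp1' : (1:ℝ) ≤ (p:ℝ) := by exact_mod_cast hp1
  have hq1' : (1:ℝ) ≤ (q:ℝ) := by exact_mod_cast hq1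
  have hP : (0:ℝ) < (p : ℝ) + q := by linarith
  have haμ : a ≤ μ := by nlinarith
  have hμb : μ ≤ b := by nlinarith
  have hamem : ∃ i, y i = a := by
    have : (univ.filter (fun k => y k = a)).Nonempty := by
      rw [← Finset.card_pos, hp]; omega
    obtain ⟨i, hi⟩ := this
    exact ⟨i, (Finset.mem_filter.mp hi).2⟩
  have hbmem : ∃ i, y i = b := by
    have : (univ.filter (fun k => y k = b)).Nonempty := by
      rw [← Finset.card_pos, hq]; omega
    obtain ⟨i, hi⟩ := this
    exact ⟨i, (Finset.mem_filter.mp hi).2⟩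
  have hapos : 0 < a := by obtain ⟨i, hi⟩ := hamem; exact hi ▸ (h1 i).1
  have hblt : b < 1 - γ := by obtain ⟨i, hi⟩ := hbmem; exact hi ▸ (h1 i).2
  -- the subset-sum formula
  have hdisj : ∀ A : Finset (Fin n),
      Disjoint (A.filter (fun k => y k = a)) (A.filter (fun k => y k = b)) := by
    intro A
    rw [Finset.disjoint_left]
    intro x hx hx'
    have ha' := (Finset.mem_filter.mp hx).2
    have hb' := (Finset.mem_filter.mp hx').2
    exact absurd (ha'.symm.trans hb') (ne_of_lt hab)
  have hsuma : ∀ A : Finset (Fin n),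
      ∑ k ∈ A.filter (fun k => y k = a), y k = ((A.filter (fun k => y k = a)).card : ℝ) * a := by
    intro A
    rw [Finset.sum_congr rfl (fun x hx => (Finset.mem_filter.mp hx).2), Finset.sum_const,
      nsmul_eq_mul]
  have hsumb : ∀ A : Finset (Fin n),
      ∑ k ∈ A.filter (fun k => y k = b), y k = ((A.filter (fun k => y k = b)).card : ℝ) * b := by
    intro A
    rw [Finset.sum_congr rfl (fun x hx => (Finset.mem_filter.mp hx).2), Finset.sum_const,
      nsmul_eq_mul]
  have hcardsplit : ∀ A : Finset (Fin n),
      (A.filter (fun k => y k = a ∨ y k = b)).card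
        = (A.filter (fun k => y k = a)).card + (A.filter (fun k => y k = b)).card := by
    intro A
    rw [Finset.filter_or, Finset.card_union_of_disjoint (hdisj A)]
  have key : ∀ A : Finset (Fin n), ∑ k ∈ A, z k =
      (∑ k ∈ A.filter (fun k => ¬(y k = a ∨ y k = b)), y k) +
      (((A.filter (fun k => y k = a)).card + (A.filter (fun k => y k = b)).card : ℕ) : ℝ) * μ := by
    intro A
    rw [← Finset.sum_filter_add_sum_filter_not A (fun k => y k = a ∨ y k = b) z]
    have e1 : ∑ k ∈ A.filter (fun k => y k = a ∨ y k = b), z k =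
        (((A.filter (fun k => y k = a)).card + (A.filter (fun k => y k = b)).card : ℕ) : ℝ) * μ := by
      rw [Finset.sum_congr rfl (fun x hx => by
        simp only [hz]
        rw [if_pos (Finset.mem_filter.mp hx).2]), Finset.sum_const, nsmul_eq_mul,
        hcardsplit A]
    have e2 : ∑ k ∈ A.filter (fun k => ¬(y k = a ∨ y k = b)), z k =
        ∑ k ∈ A.filter (fun k => ¬(y k = a ∨ y k = b)), y k := by
      refine Finset.sum_congr rfl (fun x hx => ?_)
      simp only [hz]
      rw [if_neg (Finset.mem_filter.mp hx).2]
    rw [e1, e2]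
    ring
  have hysplit : ∀ A : Finset (Fin n), ∑ k ∈ A, y k =
      (∑ k ∈ A.filter (fun k => ¬(y k = a ∨ y k = b)), y k) +
      ((A.filter (fun k => y k = a)).card : ℝ) * a +
      ((A.filter (fun k => y k = b)).card : ℝ) * b := by
    intro A
    rw [← Finset.sum_filter_add_sum_filter_not A (fun k => y k = a ∨ y k = b) y]
    rw [Finset.filter_or, Finset.sum_union (hdisj A), hsuma A, hsumb A]
    ring
  refine ⟨?_, ?_, ?_⟩
  · intro k
    simp only [hz]
    split
    · exact ⟨lt_of_lt_of_le hapos haμ, lt_of_le_of_lt hμb hblt⟩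
    · exact h1 k
  · rw [key univ]
    rw [hysplit univ] at h2
    rw [hp, hq] at *
    push_cast
    nlinarith [h2, hμ]
  · intro A hA hAu
    rw [key A]
    set ca := (A.filter (fun k => y k = a)).card with hca
    set cb := (A.filter (fun k => y k = b)).card with hcb
    set c := ca + cb with hc
    set S0 := ∑ k ∈ A.filter (fun k => ¬(y k = a ∨ y k = b)), y k with hS0
    set d := b - a with hd
    have hcap : ca ≤ p := by
      rw [← hp, hca]
      exact Finset.card_le_card (Finset.filter_subset_filter _ (Finset.subset_univ A))
    have hcbq : cb ≤ q := by
      rw [← hq, hcb]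
      exact Finset.card_le_card (Finset.filter_subset_filter _ (Finset.subset_univ A))
    have hcpq : c ≤ p + q := by omega
    set r₁ := c - min c q with hr₁
    set r₂ := min c p with hr₂
    have h12 : r₁ ≤ r₂ := by omega
    have hd0 : (0:ℝ) ≤ d := by linarith
    -- the avoidance of the progression
    have havoid : ∀ r : ℕ, r₁ ≤ r → r ≤ r₂ →
        S0 + (c : ℝ) * b - (r : ℝ) * d ∉ Set.Icc θ (θ + ν) := by
      intro r hr1 hr2
      have hrc : r ≤ c := le_trans hr2 (min_le_left _ _)
      have hrp : r ≤ p := le_trans hr2 (min_le_right _ _)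
      have hcrq : c - r ≤ q := by omega
      obtain ⟨Ra, hRa, hRacard⟩ := Finset.exists_subset_card_eq
        (s := univ.filter (fun k => y k = a)) (n := r) (by rw [hp]; exact hrp)
      obtain ⟨Sb, hSb, hSbcard⟩ := Finset.exists_subset_card_eq
        (s := univ.filter (fun k => y k = b)) (n := c - r) (by rw [hq]; exact hcrq)
      set A0 := A.filter (fun k => ¬(y k = a ∨ y k = b)) with hA0
      have hya : ∀ x ∈ Ra, y x = a := fun x hx => (Finset.mem_filter.mp (hRa hx)).2
      have hyb : ∀ x ∈ Sb, y x = b := fun x hx => (Finset.mem_filter.mp (hSb hx)).2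
      have hdj1 : Disjoint A0 Ra := by
        rw [Finset.disjoint_left]
        intro x hx hx'
        exact (Finset.mem_filter.mp hx).2 (Or.inl (hya x hx'))
      have hdj2 : Disjoint A0 Sb := by
        rw [Finset.disjoint_left]
        intro x hx hx'
        exact (Finset.mem_filter.mp hx).2 (Or.inr (hyb x hx'))
      have hdj3 : Disjoint Ra Sb := by
        rw [Finset.disjoint_left]
        intro x hx hx'
        exact absurd ((hya x hx).symm.trans (hyb x hx')) (ne_of_lt hab)
      set B := A0 ∪ Ra ∪ Sb with hB
      have hdj4 : Disjoint (A0 ∪ Ra) Sb := Finset.disjoint_union_left.mpr ⟨hdj2, hdj3⟩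
      have hsumB : ∑ k ∈ B, y k = S0 + (r : ℝ) * a + ((c - r : ℕ) : ℝ) * b := by
        rw [hB, Finset.sum_union hdj4, Finset.sum_union hdj1]
        congr 1
        · congr 1
          rw [Finset.sum_congr rfl hya, Finset.sum_const, nsmul_eq_mul, hRacard]
        · rw [Finset.sum_congr rfl hyb, Finset.sum_const, nsmul_eq_mul, hSbcard]
      have hcardB : B.card = A.card := by
        rw [hB, Finset.card_union_of_disjoint hdj4, Finset.card_union_of_disjoint hdj1,
          hRacard, hSbcard]
        have := Finset.card_filter_add_card_filter_not
          (s := A) (p := fun k => y k = a ∨ y k = b)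
        rw [hcardsplit A, ← hca, ← hcb, ← hA0] at this
        omega
      have hBne : B.Nonempty := by
        rw [← Finset.card_pos, hcardB, Finset.card_pos]
        exact hA
      have hBu : B ≠ univ := by
        intro hcon
        have h1' : A.card < n := by
          have : A ⊂ univ := Finset.ssubset_univ_iff.mpr hAu
          have := Finset.card_lt_card this
          simpa using this
        rw [hcon, Finset.card_univ, Fintype.card_fin] at hcardB
        omega
      have := h3 B hBne hBu
      rw [hsumB] at this
      have harith : S0 + (r : ℝ) * a + ((c - r : ℕ) : ℝ) * b = S0 + (c : ℝ) * b - (r : ℝ) * d := by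
        rw [Nat.cast_sub hrc, hd]
        ring
      rwa [harith] at this
    -- bounds on T = S0 + c * μ
    have hn1 : (c : ℝ) * p ≤ (r₂ : ℝ) * ((p : ℝ) + q) := by
      rcases le_total c p with h'|h'
      · rw [hr₂, min_eq_left h']
        have : (c:ℝ) * p ≤ (c:ℝ) * ((p:ℝ) + q) := by
          have hc0 : (0:ℝ) ≤ (c:ℝ) := Nat.cast_nonneg c
          nlinarith
        exact this
      · rw [hr₂, min_eq_right h']
        have hcpq' : (c:ℝ) ≤ (p:ℝ) + q := by exact_mod_cast hcpq
        have hp0 : (0:ℝ) ≤ (p:ℝ) := Nat.cast_nonneg p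
        nlinarith
    have hn2 : (r₁ : ℝ) * ((p : ℝ) + q) ≤ (c : ℝ) * p := by
      rcases le_total c q with h'|h'
      · rw [hr₁, min_eq_left h']
        simp only [Nat.sub_self, Nat.cast_zero, zero_mul]
        exact mul_nonneg (Nat.cast_nonneg _) (Nat.cast_nonneg _)
      · rw [hr₁, min_eq_right h']
        rw [Nat.cast_sub h']
        have hcpq' : (c:ℝ) ≤ (p:ℝ) + q := by exact_mod_cast hcpq
        have hq0 : (0:ℝ) ≤ (q:ℝ) := Nat.cast_nonneg q
        nlinarith
    have hμc : (c:ℝ) * (μ * ((p : ℝ) + q)) = (c:ℝ) * ((p : ℝ) * a + (q : ℝ) * b) := by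
      rw [hμ]
    apply interval_avoid hd0 hba h12 havoid
    · have key2 : (S0 + (c:ℝ) * μ - (S0 + (c:ℝ) * b - (r₂:ℝ) * d)) * ((p:ℝ) + q)
          = d * ((r₂:ℝ) * ((p:ℝ) + q) - (c:ℝ) * p) := by
        rw [hd]
        linear_combination (c:ℝ) * hμ
      have hge := mul_nonneg hd0 (sub_nonneg.mpr hn1)
      rw [← key2] at hge
      have h0 : (0:ℝ) * ((p:ℝ) + q) ≤ (S0 + (c:ℝ) * μ - (S0 + (c:ℝ) * b - (r₂:ℝ) * d)) * ((p:ℝ) + q) := by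
        rw [zero_mul]; exact hge
      have := le_of_mul_le_mul_right h0 hP
      linarith
    · have key2 : ((S0 + (c:ℝ) * b - (r₁:ℝ) * d) - (S0 + (c:ℝ) * μ)) * ((p:ℝ) + q)
          = d * ((c:ℝ) * p - (r₁:ℝ) * ((p:ℝ) + q)) := by
        rw [hd]
        linear_combination (-(c:ℝ)) * hμ
      have hge := mul_nonneg hd0 (sub_nonneg.mpr hn2)
      rw [← key2] at hge
      have h0 : (0:ℝ) * ((p:ℝ) + q) ≤ ((S0 + (c:ℝ) * b - (r₁:ℝ) * d) - (S0 + (c:ℝ) * μ)) * ((p:ℝ) + q) := by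
        rw [zero_mul]; exact hge
      have := le_of_mul_le_mul_right h0 hP
      linarith

set_option maxHeartbeats 1000000 in
lemma phase2 (γ θ ν : ℝ) : ∀ K (n : ℕ) (y : Fin n → ℝ), (Finset.univ.image y).card ≤ K →
    MemR γ θ ν y → (∀ i j, i ≠ j → 1 - γ ≤ y i + y j) →
    ∃ x : Fin n → ℝ, MemR γ θ ν x ∧ (∀ i j, i ≠ j → 1 - γ ≤ x i + x j) ∧
      (∀ i j, i ≠ j → x i = x j ∨ ν < |x i - x j|) := by
  intro K
  induction K with
  | zero =>
    intro n y hcard hy hsum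
    exfalso
    rcases Nat.eq_zero_or_pos n with rfl | hn
    · have := hy.2.1
      simp at this
    · have hne : (univ.image (α := Fin n) y).Nonempty := by
        apply Finset.Nonempty.image
        rw [← Finset.card_pos, Finset.card_univ, Fintype.card_fin]
        exact hn
      rw [← Finset.card_pos] at hne
      omega
  | succ K ih =>
    intro n y hcard hy hsum
    by_cases hgap : ∀ i j, i ≠ j → y i = y j ∨ ν < |y i - y j|
    · exact ⟨y, hy, hsum, hgap⟩
    push_neg at hgap
    obtain ⟨i, j, hij, hne, hle⟩ := hgap
    set a := min (y i) (y j) with ha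
    set b := max (y i) (y j) with hb
    have hab : a < b := min_lt_max.mpr hne
    have hba : b - a ≤ ν := by
      rw [ha, hb, max_sub_min_eq_abs (y i) (y j), abs_sub_comm]
      exact hle
    have hamem : ∃ k, y k = a := by
      rcases min_choice (y i) (y j) with h | h
      · exact ⟨i, h.symm⟩
      · exact ⟨j, h.symm⟩
    have hbmem : ∃ k, y k = b := by
      rcases max_choice (y i) (y j) with h | h
      · exact ⟨i, h.symm⟩
      · exact ⟨j, h.symm⟩
    set p := (univ.filter (fun k => y k = a)).card with hp
    set q := (univ.filter (fun k => y k = b)).card with hq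
    have hp1 : 1 ≤ p := by
      obtain ⟨k, hk⟩ := hamem
      exact Finset.card_pos.mpr ⟨k, Finset.mem_filter.mpr ⟨Finset.mem_univ _, hk⟩⟩
    have hq1 : 1 ≤ q := by
      obtain ⟨k, hk⟩ := hbmem
      exact Finset.card_pos.mpr ⟨k, Finset.mem_filter.mpr ⟨Finset.mem_univ _, hk⟩⟩
    have hp1' : (1:ℝ) ≤ (p:ℝ) := by exact_mod_cast hp1
    have hq1' : (1:ℝ) ≤ (q:ℝ) := by exact_mod_cast hq1
    have hP : (0:ℝ) < (p:ℝ) + q := by linarith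
    set μ : ℝ := ((p:ℝ) * a + (q:ℝ) * b) / ((p:ℝ) + q) with hμdef
    have hμ : μ * ((p : ℝ) + q) = (p : ℝ) * a + (q : ℝ) * b := by
      rw [hμdef]
      field_simp
    have haμ : a ≤ μ := by nlinarith
    have hμb : μ ≤ b := by nlinarith
    set z : Fin n → ℝ := fun k => if y k = a ∨ y k = b then μ else y k with hz
    have hmz : MemR γ θ ν z := average_step hp.symm hq.symm hp1 hq1 hμ hab hba hy
    set L := 1 - γ with hL
    have habL : L ≤ a + b := by
      obtain ⟨ka, hka⟩ := hamem
      obtain ⟨kb, hkb⟩ := hbmem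
      have : ka ≠ kb := by
        intro hcon
        rw [hcon, hkb] at hka
        exact absurd hka (ne_of_gt hab)
      have := hsum ka kb this
      rw [hka, hkb] at this
      exact this
    have hcase_p : p = 1 ∨ L ≤ 2 * a := by
      rcases Nat.lt_or_ge p 2 with h | h
      · left; omega
      · right
        obtain ⟨x1, hx1, x2, hx2, hx12⟩ := Finset.one_lt_card.mp (by omega : 1 < (univ.filter (fun k => y k = a)).card)
        have e1 := (Finset.mem_filter.mp hx1).2
        have e2 := (Finset.mem_filter.mp hx2).2
        have := hsum x1 x2 hx12
        rw [e1, e2] at this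
        linarith
    have hcase_q : q = 1 ∨ L ≤ 2 * b := by
      rcases Nat.lt_or_ge q 2 with h | h
      · left; omega
      · right
        obtain ⟨x1, hx1, x2, hx2, hx12⟩ := Finset.one_lt_card.mp (by omega : 1 < (univ.filter (fun k => y k = b)).card)
        have e1 := (Finset.mem_filter.mp hx1).2
        have e2 := (Finset.mem_filter.mp hx2).2
        have := hsum x1 x2 hx12
        rw [e1, e2] at this
        linarith
    have h2μ : L ≤ 2 * μ := by
      have hkey : L * ((p:ℝ) + q) ≤ 2 * μ * ((p:ℝ) + q) := by
        rcases hcase_p with hp' | hp' <;> rcases hcase_q with hq' | hq'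
        · rw [hp', hq'] at hμ ⊢
          push_cast at hμ ⊢
          nlinarith
        · have : (p:ℝ) = 1 := by rw [hp']; norm_num
          nlinarith
        · have : (q:ℝ) = 1 := by rw [hq']; norm_num
          nlinarith
        · nlinarith
      have := le_of_mul_le_mul_right hkey hP
      linarith
    have hsum' : ∀ i' j', i' ≠ j' → L ≤ z i' + z j' := by
      intro i' j' hij'
      by_cases ci : y i' = a ∨ y i' = b <;> by_cases cj : y j' = a ∨ y j' = b
      · have ei : z i' = μ := by simp only [hz]; exact if_pos ci
        have ej : z j' = μ := by simp only [hz]; exact if_pos cj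
        rw [ei, ej]; linarith
      · have ei : z i' = μ := by simp only [hz]; exact if_pos ci
        have ej : z j' = y j' := by simp only [hz]; exact if_neg cj
        rw [ei, ej]
        obtain ⟨ka, hka⟩ := hamem
        have hkaj : ka ≠ j' := by
          intro hcon
          exact cj (Or.inl (by rw [← hcon, hka]))
        have := hsum ka j' hkaj
        rw [hka] at this
        linarith
      · have ei : z i' = y i' := by simp only [hz]; exact if_neg ci
        have ej : z j' = μ := by simp only [hz]; exact if_pos cj
        rw [ei, ej]
        obtain ⟨ka, hka⟩ := hamem
        have hkai : ka ≠ i' := by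
          intro hcon
          exact ci (Or.inl (by rw [← hcon, hka]))
        have := hsum i' ka (fun hcon => hkai hcon.symm)
        rw [hka] at this
        linarith
      · have ei : z i' = y i' := by simp only [hz]; exact if_neg ci
        have ej : z j' = y j' := by simp only [hz]; exact if_neg cj
        rw [ei, ej]
        exact hsum i' j' hij'
    have hcard' : (univ.image z).card ≤ K := by
      have hsub : univ.image z ⊆ insert μ (((univ.image y).erase a).erase b) := by
        intro v hv
        obtain ⟨k, _, hk⟩ := Finset.mem_image.mp hv
        by_cases c : y k = a ∨ y k = b
        · have hv' : v = μ := by rw [← hk]; simp only [hz]; exact if_pos c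
          rw [hv']
          exact Finset.mem_insert_self _ _
        · push_neg at c
          have hv' : v = y k := by rw [← hk]; simp only [hz]; exact if_neg (by tauto)
          apply Finset.mem_insert_of_mem
          refine Finset.mem_erase.mpr ⟨hv' ▸ c.2, Finset.mem_erase.mpr ⟨hv' ▸ c.1, ?_⟩⟩
          exact Finset.mem_image.mpr ⟨k, Finset.mem_univ _, hv'.symm⟩
      have hamem' : a ∈ univ.image y := by
        obtain ⟨k, hk⟩ := hamem
        exact Finset.mem_image.mpr ⟨k, Finset.mem_univ _, hk⟩
      have hbmem' : b ∈ (univ.image y).erase a := by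
        refine Finset.mem_erase.mpr ⟨ne_of_gt hab, ?_⟩
        obtain ⟨k, hk⟩ := hbmem
        exact Finset.mem_image.mpr ⟨k, Finset.mem_univ _, hk⟩
      have c1 : ((univ.image y).erase a).card = (univ.image y).card - 1 :=
        Finset.card_erase_of_mem hamem'
      have c2 : (((univ.image y).erase a).erase b).card = ((univ.image y).erase a).card - 1 :=
        Finset.card_erase_of_mem hbmem'
      have c3 : (univ.image z).card ≤ (insert μ (((univ.image y).erase a).erase b)).card :=
        Finset.card_le_card hsub
      have c4 : (insert μ (((univ.image y).erase a).erase b)).card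
          ≤ (((univ.image y).erase a).erase b).card + 1 :=
        Finset.card_insert_le μ (((univ.image y).erase a).erase b)
      have hbim : b ∈ univ.image y := by
        obtain ⟨k, hk⟩ := hbmem
        exact Finset.mem_image.mpr ⟨k, Finset.mem_univ _, hk⟩
      have c5 : 1 < (univ.image y).card :=
        Finset.one_lt_card.mpr ⟨a, hamem', b, hbim, ne_of_lt hab⟩
      omega
    obtain ⟨x, hx1, hx2, hx3⟩ := ih n z hcard' hmz hsum'
    exact ⟨x, hx1, hx2, hx3⟩

/-- Let `P = (γ,θ,ν) ∈ 𝒬₁` and suppose `ℛ(P)` is nonempty.  Then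
`ℛ(P)` contains a vector `x` in "normal form": all components in `(0, 1-γ)` (part of
membership), any two distinct components `x i ≠ x j` satisfy `x i + x j ≥ 1-γ`, and for
all `i ≠ j` either `x i = x j` or `|x i - x j| > ν`. -/
theorem R_normal_form (γ θ ν : ℝ)
    (hQ1 : (1 / 2 ≤ γ ∧ γ < 1 - θ - ν) ∨ (1 - θ ≤ γ ∧ γ < 1))
    (hθ : 0 ≤ θ) (hθ2 : θ < 1 / 2)
    (hν : (0 ≤ ν ∧ ν < 1 / 2 - θ) ∨ ν = 1 - 2 * θ)
    (hne : ∃ (n : ℕ) (y : Fin n → ℝ), MemR γ θ ν y) :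
    ∃ (n : ℕ) (x : Fin n → ℝ), MemR γ θ ν x ∧
      (∀ i j, x i ≠ x j → 1 - γ ≤ x i + x j) ∧
      (∀ i j, i ≠ j → x i = x j ∨ ν < |x i - x j|) := by
  obtain ⟨n, y, hy⟩ := hne
  obtain ⟨m, x1, hx1, hps⟩ := phase1 γ θ ν n y hy
  obtain ⟨x, hx, hps', hgap⟩ :=
    phase2 γ θ ν (Finset.univ.image x1).card m x1 le_rfl hx1 hps
  refine ⟨m, x, hx, ?_, hgap⟩
  intro i j hxy
  exact hps' i j (by rintro rfl; exact hxy rfl)
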